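/- Let s, t, r be three distinct reflections in GL_n(ℚ) such that the subgroups ⟨s, t⟩ and ⟨t, r⟩ are finite, ⟨s, t⟩ ∩ ⟨t, r⟩ = ⟨t⟩, and the subgroup R = ⟨s, t, r⟩ contains reflections with infinitely many distinct reflecting hyperplanes. Then ℚ[x_1,…,x_n] = ℚ[x_1,…,x_n]^s + ℚ[x_1,…,x_n]^t + ℚ[x_1,…,x_n]^r as ℚ-vector spaces; that is, in each homogeneous degree every polynomial is a ℚ-linear combination of s-invariant, t-invariant, and r-invariant polynomials. -/

import Mathlib

open Matrix MvPolynomial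

/-- The action of an `n × n` rational matrix on `ℚ[x_1, …, x_n]` by linear substitution
of the variables: `x_i ↦ ∑ j, g j i • x_j`. -/
noncomputable def matAct {n : ℕ} (g : Matrix (Fin n) (Fin n) ℚ) :
    MvPolynomial (Fin n) ℚ →ₐ[ℚ] MvPolynomial (Fin n) ℚ :=
  MvPolynomial.aeval fun i => ∑ j, MvPolynomial.C (g j i) * MvPolynomial.X j

/-- The fixed subspace of `g ∈ GL_n(ℚ)` acting on `ℚ^n`; for a reflection this is its
reflecting hyperplane. -/
noncomputable def fixedSpace {n : ℕ} (g : GL (Fin n) ℚ) : Submodule ℚ (Fin n → ℚ) :=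
  LinearMap.ker (Matrix.toLin' (g : Matrix (Fin n) (Fin n) ℚ) - LinearMap.id)

/-- A reflection is an involution in `GL_n(ℚ)` whose fixed subspace has dimension `n - 1`. -/
def IsReflection {n : ℕ} (r : GL (Fin n) ℚ) : Prop :=
  r * r = 1 ∧ Module.finrank ℚ (fixedSpace r) = n - 1

/-- The subspace `ℚ[x_1, …, x_n]^H` of polynomials invariant under a subgroup
`H ≤ GL_n(ℚ)`. -/
noncomputable def polyInvariants {n : ℕ} (H : Subgroup (GL (Fin n) ℚ)) :
    Submodule ℚ (MvPolynomial (Fin n) ℚ) where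
  carrier := {f | ∀ g ∈ H, matAct ((g : GL (Fin n) ℚ) : Matrix (Fin n) (Fin n) ℚ) f = f}
  add_mem' := by
    intro a b ha hb g hg
    rw [map_add, ha g hg, hb g hg]
  zero_mem' := by
    intro g hg
    rw [map_zero]
  smul_mem' := by
    intro c f hf g hg
    rw [_root_.map_smul, hf g hg]

/-- The relative invariants `ℚ[x_1, …, x_n]^H_det` (with respect to the determinant) of a
subgroup `H ≤ GL_n(ℚ)`: the polynomials `f` with `g • f = det g • f` for all `g ∈ H`. -/
noncomputable def polyRelInvariants {n : ℕ} (H : Subgroup (GL (Fin n) ℚ)) :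
    Submodule ℚ (MvPolynomial (Fin n) ℚ) where
  carrier := {f | ∀ g ∈ H,
    matAct ((g : GL (Fin n) ℚ) : Matrix (Fin n) (Fin n) ℚ) f
      = ((g : GL (Fin n) ℚ) : Matrix (Fin n) (Fin n) ℚ).det • f}
  add_mem' := by
    intro a b ha hb g hg
    rw [map_add, ha g hg, hb g hg, smul_add]
  zero_mem' := by
    intro g hg
    rw [map_zero, smul_zero]
  smul_mem' := by
    intro c f hf g hg
    rw [_root_.map_smul, hf g hg, smul_comm]

/-- The subspace `ℚ[x_1, …, x_n]^g` of polynomials fixed by a single element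
`g ∈ GL_n(ℚ)`. -/
noncomputable def polyInvariantsElem {n : ℕ} (g : GL (Fin n) ℚ) :
    Submodule ℚ (MvPolynomial (Fin n) ℚ) where
  carrier := {f | matAct ((g : GL (Fin n) ℚ) : Matrix (Fin n) (Fin n) ℚ) f = f}
  add_mem' := by
    intro a b ha hb
    rw [Set.mem_setOf_eq, map_add, ha, hb]
  zero_mem' := by
    rw [Set.mem_setOf_eq, map_zero]
  smul_mem' := by
    intro c f hf
    rw [Set.mem_setOf_eq, _root_.map_smul, hf]



/-! ### Auxiliary machinery -/

section Aux

lemma matAct_X {n : ℕ} (g : Matrix (Fin n) (Fin n) ℚ) (i : Fin n) :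
    matAct g (X i) = ∑ j, C (g j i) * X j := by simp [matAct]

lemma matAct_C {n : ℕ} (g : Matrix (Fin n) (Fin n) ℚ) (c : ℚ) :
    matAct g (C c) = C c := by
  simp [matAct, MvPolynomial.algebraMap_eq]

lemma matAct_comp {n : ℕ} (g h : Matrix (Fin n) (Fin n) ℚ) (p : MvPolynomial (Fin n) ℚ) :
    matAct g (matAct h p) = matAct (g * h) p := by
  have : (matAct g).comp (matAct h) = matAct (g * h) := by
    apply MvPolynomial.algHom_ext
    intro i
    simp only [AlgHom.comp_apply, matAct_X, map_sum, _root_.map_mul, matAct_C,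
      Finset.mul_sum]
    rw [Finset.sum_comm]
    refine Finset.sum_congr rfl fun j _ => ?_
    rw [Matrix.mul_apply, map_sum, Finset.sum_mul]
    refine Finset.sum_congr rfl fun k _ => ?_
    rw [_root_.map_mul]; ring
  exact DFunLike.congr_fun this p

lemma matAct_one {n : ℕ} (p : MvPolynomial (Fin n) ℚ) :
    matAct (1 : Matrix (Fin n) (Fin n) ℚ) p = p := by
  have : matAct (1 : Matrix (Fin n) (Fin n) ℚ) = AlgHom.id ℚ _ := by
    apply MvPolynomial.algHom_ext
    intro i
    simp [matAct_X, Matrix.one_apply]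
  rw [this]; rfl

/-- linear form with coefficient vector `v` -/
noncomputable def ell {n : ℕ} (v : Fin n → ℚ) : MvPolynomial (Fin n) ℚ := ∑ i, C (v i) * X i

lemma matAct_ell {n : ℕ} (g : Matrix (Fin n) (Fin n) ℚ) (v : Fin n → ℚ) :
    matAct g (ell v) = ell (g.mulVec v) := by
  simp only [ell, map_sum, _root_.map_mul, matAct_X, matAct_C, Finset.mul_sum]
  rw [Finset.sum_comm]
  refine Finset.sum_congr rfl fun j _ => ?_
  rw [Matrix.mulVec, dotProduct, map_sum, Finset.sum_mul]
  refine Finset.sum_congr rfl fun k _ => ?_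
  rw [_root_.map_mul]; ring

lemma eval_ell {n : ℕ} (v w : Fin n → ℚ) : eval w (ell v) = ∑ i, v i * w i := by
  simp [ell]

lemma det_of_isReflection {n : ℕ} (g : GL (Fin n) ℚ) (hg : IsReflection g) (hn : n ≠ 0) :
    ((g : Matrix (Fin n) (Fin n) ℚ)).det = -1 := by
  obtain ⟨hinv, hrank⟩ := hg
  set M : Matrix (Fin n) (Fin n) ℚ := (g : Matrix (Fin n) (Fin n) ℚ) with hM
  have hMM : M * M = 1 := by
    have := congrArg (fun x : GL (Fin n) ℚ => (x : Matrix (Fin n) (Fin n) ℚ)) hinv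
    simpa using this
  set f := Matrix.toLin' M with hf
  have hff : ∀ v, f (f v) = v := by
    intro v
    have : f.comp f = LinearMap.id := by
      rw [hf, ← Matrix.toLin'_mul, hMM, Matrix.toLin'_one]
    exact DFunLike.congr_fun this v
  set K := fixedSpace g with hK
  have hKmem : ∀ v, v ∈ K ↔ f v = v := by
    intro v
    simp [hK, fixedSpace, LinearMap.mem_ker, sub_eq_zero, hf, hM]
  -- find u with f u = -u, u ≠ 0
  have hfne : ∃ w, f w ≠ w := by
    by_contra h
    push_neg at h
    have : K = ⊤ := by
      ext v; simp [hKmem, h]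
    rw [this] at hrank
    have : Module.finrank ℚ (⊤ : Submodule ℚ (Fin n → ℚ)) = n := by
      simp [Module.finrank_fin_fun]
    omega
  obtain ⟨w, hw⟩ := hfne
  set u := f w - w with hu
  have hune : u ≠ 0 := sub_ne_zero.mpr hw
  have hfu : f u = -u := by
    simp only [hu, map_sub, hff]
    abel
  -- decompose each basis vector
  have hsup : K ⊔ Submodule.span ℚ {u} = ⊤ := by
    apply Submodule.eq_top_of_finrank_eq
    have hdisj : K ⊓ Submodule.span ℚ {u} = ⊥ := by
      rw [eq_bot_iff]
      rintro v ⟨hv1, hv2⟩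
      obtain ⟨c, rfl⟩ := Submodule.mem_span_singleton.mp hv2
      have h1 : f (c • u) = c • u := (hKmem _).mp hv1
      rw [_root_.map_smul, hfu, smul_neg] at h1
      have h2 : (2:ℚ) • (c • u) = 0 := by
        rw [two_smul]
        nth_rewrite 1 [← h1]
        abel
      rcases smul_eq_zero.mp h2 with h | h
      · norm_num at h
      · simp [h]
    have := Submodule.finrank_sup_add_finrank_inf_eq K (Submodule.span ℚ {u})
    rw [hdisj] at this
    simp only [finrank_span_singleton hune, hrank, finrank_bot, add_zero] at this
    rw [this, Module.finrank_fin_fun]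
    omega
  -- decompose basis vectors: e_j = k_j + cφ j • u
  have hdec : ∀ j : Fin n, ∃ c : ℚ, ∃ k, k ∈ K ∧ (Pi.single j 1 : Fin n → ℚ) = k + c • u := by
    intro j
    have : (Pi.single j 1 : Fin n → ℚ) ∈ K ⊔ Submodule.span ℚ {u} := by
      rw [hsup]; trivial
    obtain ⟨k, hk, z, hz, hkz⟩ := Submodule.mem_sup.mp this
    obtain ⟨c, rfl⟩ := Submodule.mem_span_singleton.mp hz
    exact ⟨c, k, hk, hkz.symm⟩
  choose cφ kv hkK hke using hdec
  -- f e_j = e_j - 2 (cφ j) • u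
  have hfe : ∀ j, f (Pi.single j 1) = Pi.single j 1 - (2 * cφ j) • u := by
    intro j
    rw [hke j, map_add, _root_.map_smul, hfu, (hKmem _).mp (hkK j)]
    rw [smul_neg]
    ext i
    simp [two_mul, add_smul]
    abel
  -- entries of M
  have hent : ∀ i j, M i j = (Pi.single j 1 : Fin n → ℚ) i - 2 * cφ j * u i := by
    intro i j
    have h1 : f (Pi.single j 1) = M.mulVec (Pi.single j 1) := by rw [hf, Matrix.toLin'_apply]
    have h2 : M.mulVec (Pi.single j 1) i = M i j := by
      rw [Matrix.mulVec_single]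
      simp
    have := congrFun (hfe j) i
    rw [h1] at this
    rw [← h2, this]
    simp [mul_assoc]
  have hMform : M = 1 + Matrix.replicateCol Unit ((-2 : ℚ) • u) * Matrix.replicateRow Unit cφ := by
    ext i j
    rw [hent i j]
    simp only [Matrix.add_apply, Matrix.mul_apply, Finset.univ_unique, Finset.sum_singleton,
      Matrix.replicateCol_apply, Matrix.replicateRow_apply, Pi.smul_apply, Matrix.one_apply, smul_eq_mul]
    rw [Pi.single_apply]
    by_cases h : i = j <;> simp [h] <;> ring
  -- the coefficient of u in its own decomposition is 1
  have ha : ∑ j, cφ j * u j = 1 := by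
    by_contra hne
    set a := ∑ j, cφ j * u j with haa
    have husum : u = (∑ j, u j • kv j) + a • u := by
      have : u = ∑ j, u j • (Pi.single j 1 : Fin n → ℚ) := by
        ext i
        rw [Fintype.sum_apply]
        simp [Pi.single_apply, mul_comm]
      nth_rewrite 1 [this]
      rw [Finset.sum_congr rfl (fun j _ => by rw [hke j, smul_add, smul_smul])]
      rw [Finset.sum_add_distrib, ← Finset.sum_smul]
      congr 1
      rw [haa]
      congr 1
      exact Finset.sum_congr rfl fun j _ => by ring
    have hkmem : (1 - a) • u ∈ K := by
      have h3 := congrArg (fun x => x - a • u) husum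
      simp only [add_sub_cancel_right] at h3
      have h4 : (1 - a) • u = ∑ j, u j • kv j := by
        rw [sub_smul, one_smul, h3]
      rw [h4]
      exact Submodule.sum_mem _ fun j _ => Submodule.smul_mem _ _ (hkK j)
    have h1a : (1 - a) ≠ 0 := fun h => hne (by linarith [sub_eq_zero.mp h])
    have huK : u ∈ K := by
      have := Submodule.smul_mem K (1-a)⁻¹ hkmem
      rwa [smul_smul, inv_mul_cancel₀ h1a, one_smul] at this
    have : f u = u := (hKmem _).mp huK
    rw [hfu] at this
    have h2 : (2:ℚ) • u = 0 := by
      rw [two_smul]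
      nth_rewrite 1 [← this]
      abel
    rcases smul_eq_zero.mp h2 with h | h
    · norm_num at h
    · exact hune h
  rw [hMform, Matrix.det_one_add_replicateCol_mul_replicateRow]
  rw [dotProduct]
  have : ∑ j, cφ j * ((-2:ℚ) • u) j = -2 := by
    simp only [Pi.smul_apply, smul_eq_mul]
    rw [show ∑ j, cφ j * (-2 * u j) = (-2) * ∑ j, cφ j * u j by rw [Finset.mul_sum]; exact Finset.sum_congr rfl fun j _ => by ring]
    rw [ha]; ring
  rw [this]; norm_num

variable {n : ℕ}

abbrev APoly (n : ℕ) := MvPolynomial (Fin n) ℚ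
abbrev BPoly (n : ℕ) := MvPolynomial (Fin n) (APoly n)

/-- apply a linear functional to the coefficients -/
noncomputable def lamApply (lam : APoly n →ₗ[ℚ] ℚ) (p : BPoly n) : APoly n :=
  ∑ m ∈ p.support, monomial m (lam (coeff m p))

lemma lamApply_eq_sum_subset (lam : APoly n →ₗ[ℚ] ℚ) (p : BPoly n) (t : Finset (Fin n →₀ ℕ))
    (h : p.support ⊆ t) : lamApply lam p = ∑ m ∈ t, monomial m (lam (coeff m p)) := by
  refine Finset.sum_subset h fun m _ hm => ?_
  rw [notMem_support_iff.mp hm]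
  simp

lemma lamApply_add (lam : APoly n →ₗ[ℚ] ℚ) (p q : BPoly n) :
    lamApply lam (p + q) = lamApply lam p + lamApply lam q := by
  classical
  rw [lamApply_eq_sum_subset lam (p+q) (p.support ∪ q.support) MvPolynomial.support_add,
    lamApply_eq_sum_subset lam p (p.support ∪ q.support) Finset.subset_union_left,
    lamApply_eq_sum_subset lam q (p.support ∪ q.support) Finset.subset_union_right,
    ← Finset.sum_add_distrib]
  refine Finset.sum_congr rfl fun m _ => ?_
  rw [coeff_add, map_add, map_add]

lemma coeff_lamApply (lam : APoly n →ₗ[ℚ] ℚ) (p : BPoly n) (m : Fin n →₀ ℕ) :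
    coeff m (lamApply lam p) = lam (coeff m p) := by
  by_cases hm : m ∈ p.support
  · rw [lamApply, coeff_sum]
    rw [Finset.sum_eq_single m (fun m' _ hne => by rw [coeff_monomial, if_neg hne])
      (fun h => absurd hm h)]
    rw [coeff_monomial, if_pos rfl]
  · rw [notMem_support_iff.mp hm, map_zero]
    rw [lamApply, coeff_sum]
    apply Finset.sum_eq_zero
    intro m' hm'
    rw [coeff_monomial]
    split_ifs with h
    · subst h; exact absurd hm' hm
    · rfl

lemma lamApply_monomial (lam : APoly n →ₗ[ℚ] ℚ) (m : Fin n →₀ ℕ) (a : APoly n) :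
    lamApply lam (monomial m a) = monomial m (lam a) := by
  rw [lamApply_eq_sum_subset lam _ {m} support_monomial_subset, Finset.sum_singleton,
    coeff_monomial, if_pos rfl]

lemma eval_lamApply (lam : APoly n →ₗ[ℚ] ℚ) (p : BPoly n) (v : Fin n → ℚ) :
    eval v (lamApply lam p) = lam (eval₂ (RingHom.id (APoly n)) (fun i => C (v i)) p) := by
  induction p using MvPolynomial.induction_on' with
  | monomial m a =>
    rw [lamApply_monomial, eval_monomial, eval₂_monomial]
    rw [RingHom.id_apply]
    have : (m.prod fun i k => (C (v i) : APoly n) ^ k) = C (m.prod fun i k => v i ^ k) := by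
      rw [Finsupp.prod, Finsupp.prod, map_prod]
      exact Finset.prod_congr rfl fun i _ => by rw [map_pow]
    rw [this, mul_comm a, ← smul_eq_C_mul, LinearMap.map_smul, smul_eq_mul, mul_comm]
  | add p q hp hq =>
    rw [lamApply_add, map_add, hp, hq, eval₂_add, map_add]

/-- the generic linear form -/
noncomputable def Lgen (n : ℕ) : BPoly n := ∑ i, C (X i) * X i

lemma eval₂_Lgen_pow (v : Fin n → ℚ) (d : ℕ) :
    eval₂ (RingHom.id (APoly n)) (fun i => C (v i)) ((Lgen n) ^ d) = (ell v) ^ d := by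
  have h1 : eval₂ (RingHom.id (APoly n)) (fun i => C (v i)) (Lgen n) = ell v := by
    rw [Lgen, eval₂_sum]
    refine Finset.sum_congr rfl fun i _ => ?_
    rw [eval₂_mul, eval₂_C, eval₂_X, RingHom.id_apply, mul_comm, ← smul_eq_C_mul, smul_eq_C_mul]
  calc eval₂ (RingHom.id (APoly n)) (fun i => C (v i)) ((Lgen n) ^ d)
      = eval₂Hom (RingHom.id (APoly n)) (fun i => C (v i)) ((Lgen n) ^ d) := rfl
    _ = (eval₂Hom (RingHom.id (APoly n)) (fun i => C (v i)) (Lgen n)) ^ d := by rw [map_pow]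
    _ = (ell v) ^ d := by rw [← h1]; rfl

noncomputable def Fpoly (lam : APoly n →ₗ[ℚ] ℚ) (d : ℕ) : APoly n :=
  lamApply lam ((Lgen n) ^ d)

lemma eval_Fpoly (lam : APoly n →ₗ[ℚ] ℚ) (d : ℕ) (v : Fin n → ℚ) :
    eval v (Fpoly lam d) = lam ((ell v) ^ d) := by
  rw [Fpoly, eval_lamApply, eval₂_Lgen_pow]

lemma coeff_Lgen_pow (d : ℕ) : ∀ (m : Fin n →₀ ℕ), (m.sum fun _ e => e) = d →
    ∃ c : ℕ, 0 < c ∧ coeff m ((Lgen n) ^ d) = (c : ℚ) • monomial m (1 : ℚ) := by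
  classical
  induction d with
  | zero =>
    intro m hm
    have hm0 : m = 0 := by
      ext i
      simp only [Finsupp.coe_zero, Pi.zero_apply]
      by_contra h
      have hi : i ∈ m.support := Finsupp.mem_support_iff.mpr h
      have h2 : m i ≤ ∑ a ∈ m.support, m a := Finset.single_le_sum (fun _ _ => Nat.zero_le _) hi
      rw [Finsupp.sum] at hm
      omega
    subst hm0
    refine ⟨1, one_pos, ?_⟩
    simp [MvPolynomial.coeff_one]
  | succ d IH =>
    intro m hm
    have hsupp : m.support.Nonempty := by
      by_contra h
      rw [Finset.not_nonempty_iff_eq_empty, Finsupp.support_eq_empty] at h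
      subst h
      simp [Finsupp.sum_zero_index] at hm
    have key : ∀ i ∈ m.support, ∃ c : ℕ, 0 < c ∧
        coeff (m - Finsupp.single i 1) ((Lgen n) ^ d)
          = (c : ℚ) • monomial (m - Finsupp.single i 1) (1 : ℚ) := by
      intro i hi
      apply IH
      have hle : Finsupp.single i 1 ≤ m := by
        rw [Finsupp.single_le_iff]
        exact Nat.one_le_iff_ne_zero.mpr (Finsupp.mem_support_iff.mp hi)
      have hadd : (m - Finsupp.single i 1) + Finsupp.single i 1 = m := tsub_add_cancel_of_le hle
      have h2 : ((m - Finsupp.single i 1) + Finsupp.single i 1).sum (fun _ e => e)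
          = ((m - Finsupp.single i 1).sum fun _ e => e)
            + ((Finsupp.single i (1:ℕ)).sum fun _ e => e) :=
        Finsupp.sum_add_index' (fun _ => rfl) (fun _ _ _ => rfl)
      rw [hadd, hm] at h2
      rw [Finsupp.sum_single_index rfl] at h2
      omega
    choose! cf hpos hco using key
    refine ⟨∑ i ∈ m.support, cf i, ?_, ?_⟩
    · obtain ⟨i, hi⟩ := hsupp
      exact Finset.sum_pos' (fun j _ => Nat.zero_le _) ⟨i, hi, hpos i hi⟩
    · have hL : Lgen n * Lgen n ^ d = ∑ i, C (X i) * X i * Lgen n ^ d := by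
        rw [Lgen, Finset.sum_mul]
      have hterm : ∀ i : Fin n, coeff m (C (X i) * X i * ((Lgen n) ^ d))
          = if i ∈ m.support then (cf i : ℚ) • monomial m (1:ℚ) else 0 := by
        intro i
        rw [mul_assoc, coeff_C_mul, coeff_X_mul']
        split_ifs with h
        · have hle2 : Finsupp.single i 1 ≤ m :=
            Finsupp.single_le_iff.mpr (Nat.one_le_iff_ne_zero.mpr (Finsupp.mem_support_iff.mp h))
          rw [hco i h, Algebra.mul_smul_comm]
          congr 1
          rw [X, monomial_mul, mul_one, add_tsub_cancel_of_le hle2]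
        · rw [mul_zero]
      rw [pow_succ, mul_comm ((Lgen n)^d) (Lgen n), hL, coeff_sum]
      rw [Finset.sum_congr rfl fun i _ => hterm i]
      rw [Finset.sum_ite_mem, Finset.univ_inter, Nat.cast_sum, Finset.sum_smul]

/-- substitute along the line `t ↦ v + t u` -/
noncomputable def lineSub (v u : Fin n → ℚ) :
    MvPolynomial (Fin n) ℚ →ₐ[ℚ] Polynomial ℚ :=
  aeval (fun j => Polynomial.C (v j) + Polynomial.C (u j) * Polynomial.X)

lemma lineSub_eval (v u : Fin n → ℚ) (p : MvPolynomial (Fin n) ℚ) (t : ℚ) :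
    (lineSub v u p).eval t = eval (fun j => v j + t * u j) p := by
  have h : (Polynomial.evalRingHom t).comp (lineSub v u : MvPolynomial (Fin n) ℚ →+* Polynomial ℚ)
      = (eval (fun j => v j + t * u j) : MvPolynomial (Fin n) ℚ →+* ℚ) := by
    apply MvPolynomial.ringHom_ext
    · intro a; simp [lineSub]
    · intro i; simp [lineSub]; ring
  exact DFunLike.congr_fun h p

lemma natDegree_lineSub_le (v u : Fin n → ℚ) (p : MvPolynomial (Fin n) ℚ) :
    (lineSub v u p).natDegree ≤ p.totalDegree := by
  conv_lhs =>
    rw [show p = ∑ m ∈ p.support, monomial m (coeff m p) from (support_sum_monomial_coeff p).symm,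
      map_sum]
  apply Polynomial.natDegree_sum_le_of_forall_le
  intro m hm
  rw [lineSub, aeval_monomial]
  refine le_trans (Polynomial.natDegree_mul_le) ?_
  have h1 : (algebraMap ℚ (Polynomial ℚ) (coeff m p)).natDegree = 0 := Polynomial.natDegree_C _
  rw [h1, zero_add]
  refine le_trans (Polynomial.natDegree_prod_le _ _) ?_
  have hms : ∀ j ∈ m.support, (( Polynomial.C (v j) + Polynomial.C (u j) * Polynomial.X) ^ (m j)).natDegree ≤ m j := by
    intro j _
    have h2 : (Polynomial.C (v j) + Polynomial.C (u j) * Polynomial.X).natDegree ≤ 1 := by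
      refine le_trans (Polynomial.natDegree_add_le _ _) ?_
      simp only [Polynomial.natDegree_C, max_le_iff]
      refine ⟨Nat.zero_le _, le_trans (Polynomial.natDegree_mul_le) ?_⟩
      simp
    calc ((Polynomial.C (v j) + Polynomial.C (u j) * Polynomial.X) ^ m j).natDegree
        ≤ m j * (Polynomial.C (v j) + Polynomial.C (u j) * Polynomial.X).natDegree :=
          Polynomial.natDegree_pow_le
      _ ≤ m j * 1 := Nat.mul_le_mul_left _ h2
      _ = m j := Nat.mul_one _
  refine le_trans (Finset.sum_le_sum hms) ?_
  have : ∑ j ∈ m.support, m j = m.sum fun _ e => e := rfl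
  rw [this]
  exact le_totalDegree  hm

lemma key_dvd (i₀ : Fin n) (g0 : MvPolynomial (Fin n) ℚ) (p : MvPolynomial (Fin n) ℚ) :
    (X i₀ - g0) ∣ (p - aeval (Function.update X i₀ g0) p) := by
  induction p using MvPolynomial.induction_on with
  | C a => simp [algebraMap_eq]
  | add p q hp hq =>
    rw [map_add]
    have : p + q - (aeval (Function.update X i₀ g0) p + aeval (Function.update X i₀ g0) q)
        = (p - aeval (Function.update X i₀ g0) p) + (q - aeval (Function.update X i₀ g0) q) := by
      ring
    rw [this]
    exact dvd_add hp hq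
  | mul_X p j hp =>
    rw [_root_.map_mul, aeval_X]
    have : p * X j - aeval (Function.update X i₀ g0) p * Function.update X i₀ g0 j
        = (p - aeval (Function.update X i₀ g0) p) * X j
          + aeval (Function.update X i₀ g0) p * (X j - Function.update X i₀ g0 j) := by
      ring
    rw [this]
    refine dvd_add (Dvd.dvd.mul_right hp _) ?_
    by_cases h : j = i₀
    · subst h
      rw [Function.update_self]
      exact Dvd.dvd.mul_left dvd_rfl _
    · rw [Function.update_of_ne h]
      simp

lemma eval_aeval (g : Fin n → MvPolynomial (Fin n) ℚ) (v : Fin n → ℚ)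
    (p : MvPolynomial (Fin n) ℚ) :
    eval v (aeval g p) = eval (fun j => eval v (g j)) p := by
  have h : (eval v).comp ((aeval g : MvPolynomial (Fin n) ℚ →ₐ[ℚ] MvPolynomial (Fin n) ℚ) :
      MvPolynomial (Fin n) ℚ →+* MvPolynomial (Fin n) ℚ)
      = (eval (fun j => eval v (g j)) : MvPolynomial (Fin n) ℚ →+* ℚ) := by
    apply MvPolynomial.ringHom_ext
    · intro a; simp
    · intro i; simp
  exact DFunLike.congr_fun h p

lemma ell_dvd_of_vanishing (c : Fin n → ℚ) (i₀ : Fin n) (hc : c i₀ ≠ 0)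
    (F : MvPolynomial (Fin n) ℚ)
    (hv : ∀ v : Fin n → ℚ, (∑ j, c j * v j) = 0 → eval v F = 0) : ell c ∣ F := by
  classical
  set g0 : MvPolynomial (Fin n) ℚ := X i₀ - C (c i₀)⁻¹ * ell c with hg0
  have hσF : aeval (Function.update X i₀ g0) F = 0 := by
    apply MvPolynomial.funext
    intro v
    rw [map_zero, eval_aeval]
    set v' : Fin n → ℚ := fun j => eval v (Function.update X i₀ g0 j) with hv'
    have hv'j : ∀ j, v' j = if j = i₀ then v i₀ - (c i₀)⁻¹ * (∑ k, c k * v k) else v j := by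
      intro j
      by_cases h : j = i₀
      · subst h
        simp only [hv', Function.update_self, if_pos rfl, hg0]
        rw [map_sub, _root_.map_mul, eval_C, eval_X, eval_ell]; simp
      · simp [hv', Function.update_of_ne h, h]
    apply hv
    have hsplit : ∀ w : Fin n → ℚ, ∑ j, c j * w j = c i₀ * w i₀ + ∑ j ∈ Finset.univ.erase i₀, c j * w j := by
      intro w
      rw [← Finset.add_sum_erase _ _ (Finset.mem_univ i₀)]
    rw [hsplit]
    have h1 : ∀ j ∈ Finset.univ.erase i₀, c j * v' j = c j * v j := by
      intro j hj
      rw [hv'j, if_neg (Finset.ne_of_mem_erase hj)]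
    rw [Finset.sum_congr rfl h1, hv'j, if_pos rfl]
    have h2 : ∑ j ∈ Finset.univ.erase i₀, c j * v j = (∑ k, c k * v k) - c i₀ * v i₀ := by
      rw [hsplit v]; ring
    rw [h2]
    field_simp
    ring
  have hdvd := key_dvd i₀ g0 F
  rw [hσF, sub_zero] at hdvd
  have hXg : X i₀ - g0 = C (c i₀)⁻¹ * ell c := by rw [hg0]; ring
  rw [hXg] at hdvd
  obtain ⟨e, he⟩ := hdvd
  exact ⟨C (c i₀)⁻¹ * e, by rw [he]; ring⟩

lemma exists_covector (H : Submodule ℚ (Fin n → ℚ)) (hH : Module.finrank ℚ H = n - 1)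
    (hn : n ≠ 0) : ∃ c : Fin n → ℚ, ∀ v, ((∑ j, c j * v j = 0) ↔ v ∈ H) := by
  have hVrank : Module.finrank ℚ (Fin n → ℚ) = n := Module.finrank_fin_fun ℚ
  have hHne : H ≠ ⊤ := by
    intro h
    rw [h, finrank_top, hVrank] at hH
    omega
  obtain ⟨W, hW⟩ := Submodule.exists_isCompl H
  have hWrank : Module.finrank ℚ W = 1 := by
    have := Submodule.finrank_add_eq_of_isCompl hW
    rw [hH, hVrank] at this
    omega
  have bW := Module.finBasisOfFinrankEq ℚ W hWrank
  set proj := Submodule.linearProjOfIsCompl W H hW.symm with hproj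
  set φ : (Fin n → ℚ) →ₗ[ℚ] ℚ := (bW.coord 0).comp proj with hφ
  have hker : ∀ v, φ v = 0 ↔ v ∈ H := by
    intro v
    constructor
    · intro h
      have hv0 : proj v = 0 := by
        have hrep : proj v = (bW.repr (proj v)) 0 • bW 0 := by
          have := Module.Basis.sum_repr bW (proj v)
          rw [← this]
          rw [Finset.sum_fin_eq_sum_range]
          simp
        rw [hrep]
        have : (bW.repr (proj v)) 0 = 0 := h
        rw [this, zero_smul]
      exact (Submodule.linearProjOfIsCompl_apply_eq_zero_iff hW.symm).mp hv0
    · intro h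
      have : proj v = 0 := (Submodule.linearProjOfIsCompl_apply_eq_zero_iff hW.symm).mpr h
      rw [hφ, LinearMap.comp_apply, this, map_zero]
  refine ⟨fun j => φ (Pi.single j 1), fun v => ?_⟩
  have hsum : ∑ j, φ (Pi.single j 1) * v j = φ v := by
    have hv : v = ∑ j, v j • (Pi.single j 1 : Fin n → ℚ) := by
      ext i
      rw [Fintype.sum_apply]
      simp [Pi.single_apply, mul_comm]
    conv_rhs => rw [hv]
    rw [map_sum]
    exact Finset.sum_congr rfl fun j _ => by rw [LinearMap.map_smul, smul_eq_mul, mul_comm]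
  rw [hsum]
  exact hker v

lemma exists_functional {V : Type*} [AddCommGroup V] [Module ℚ V]
    (S : Submodule ℚ V) (x : V) (hx : x ∉ S) :
    ∃ lam : V →ₗ[ℚ] ℚ, (∀ y ∈ S, lam y = 0) ∧ lam x ≠ 0 := by
  set y := S.mkQ x with hy
  have hyne : y ≠ 0 := by
    intro h
    exact hx ((Submodule.Quotient.mk_eq_zero S).mp h)
  obtain ⟨W, hW⟩ := Submodule.exists_isCompl (Submodule.span ℚ {y})
  set proj := Submodule.linearProjOfIsCompl _ _ hW with hproj
  set ξ : (V ⧸ S) →ₗ[ℚ] ℚ :=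
    (((LinearEquiv.toSpanNonzeroSingleton ℚ (V ⧸ S) y hyne).symm :
      (Submodule.span ℚ {y}) →ₗ[ℚ] ℚ).comp proj) with hξ
  refine ⟨ξ.comp S.mkQ, fun z hz => ?_, ?_⟩
  · have : S.mkQ z = 0 := (Submodule.Quotient.mk_eq_zero S).mpr hz
    rw [LinearMap.comp_apply, this, map_zero]
  · have h1 : proj y = ⟨y, Submodule.mem_span_singleton_self y⟩ :=
      Submodule.linearProjOfIsCompl_apply_left hW ⟨y, Submodule.mem_span_singleton_self y⟩
    rw [LinearMap.comp_apply, ← hy, hξ, LinearMap.comp_apply, hproj, h1]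
    have h2 : ((LinearEquiv.toSpanNonzeroSingleton ℚ (V ⧸ S) y hyne).symm)
        ⟨y, Submodule.mem_span_singleton_self y⟩ = 1 := by
      rw [show (⟨y, Submodule.mem_span_singleton_self y⟩ : Submodule.span ℚ {y})
          = LinearEquiv.toSpanNonzeroSingleton ℚ (V ⧸ S) y hyne 1 from
        (LinearEquiv.toSpanNonzeroSingleton_one ℚ (V ⧸ S) y hyne).symm]
      rw [LinearEquiv.symm_apply_apply]
    rw [show ((((LinearEquiv.toSpanNonzeroSingleton ℚ (V ⧸ S) y hyne).symm :
        (Submodule.span ℚ {y}) →ₗ[ℚ] ℚ)) ⟨y, Submodule.mem_span_singleton_self y⟩ : ℚ)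
        = 1 from h2]
    exact one_ne_zero

lemma prod_ell_dvd (T : Finset (Submodule ℚ (Fin n → ℚ)))
    (cfun : Submodule ℚ (Fin n → ℚ) → (Fin n → ℚ))
    (hspec : ∀ H ∈ T, ∀ v, ((∑ j, cfun H j * v j = 0) ↔ v ∈ H))
    (hne : ∀ H ∈ T, ∃ u, u ∉ H)
    (hpair : ∀ H ∈ T, ∀ H' ∈ T, H ≠ H' → ∃ u ∈ H, u ∉ H') :
    ∀ F : MvPolynomial (Fin n) ℚ, (∀ H ∈ T, ∀ v ∈ H, eval v F = 0) →
      (∏ H ∈ T, ell (cfun H)) ∣ F := by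
  classical
  induction T using Finset.cons_induction with
  | empty => intro F _; simp
  | cons H₀ T' hH₀ IH =>
    intro F hvan
    have hmem0 : H₀ ∈ Finset.cons H₀ T' hH₀ := Finset.mem_cons_self _ _
    -- a nonzero coefficient of the covector of H₀
    have hc0 : ∃ i₀, cfun H₀ i₀ ≠ 0 := by
      by_contra h
      push_neg at h
      obtain ⟨u, hu⟩ := hne H₀ hmem0
      exact hu ((hspec H₀ hmem0 u).mp (by simp [h]))
    obtain ⟨i₀, hi₀⟩ := hc0
    have hdvd0 : ell (cfun H₀) ∣ F := by
      apply ell_dvd_of_vanishing _ i₀ hi₀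
      intro v hv
      exact hvan H₀ hmem0 v ((hspec H₀ hmem0 v).mp hv)
    obtain ⟨G, hG⟩ := hdvd0
    have hvanG : ∀ H ∈ T', ∀ v ∈ H, eval v G = 0 := by
      intro H hH v hv
      have hmemH : H ∈ Finset.cons H₀ T' hH₀ := Finset.mem_cons_of_mem hH
      have hHne : H ≠ H₀ := fun h => hH₀ (h ▸ hH)
      obtain ⟨u, huH, huH₀⟩ := hpair H hmemH H₀ hmem0 hHne
      set A := ∑ j, cfun H₀ j * v j with hA
      set B := ∑ j, cfun H₀ j * u j with hB
      have hBne : B ≠ 0 := fun h => huH₀ ((hspec H₀ hmem0 u).mp h)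
      set q := lineSub v u G with hq
      have hroots : ∀ t : ℚ, A + t * B ≠ 0 → q.eval t = 0 := by
        intro t ht
        have hline : (fun j => v j + t * u j) ∈ H := by
          have : (fun j => v j + t * u j) = v + t • u := by ext j; simp
          rw [this]
          exact H.add_mem hv (H.smul_mem t huH)
        have hFv : eval (fun j => v j + t * u j) F = 0 :=
          hvan H hmemH _ hline
        rw [hG, _root_.map_mul] at hFv
        have hellv : eval (fun j => v j + t * u j) (ell (cfun H₀)) = A + t * B := by
          rw [eval_ell, hA, hB, Finset.mul_sum, ← Finset.sum_add_distrib]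
          exact Finset.sum_congr rfl fun j _ => by ring
        rw [hellv] at hFv
        rw [hq, lineSub_eval]
        exact (mul_eq_zero.mp hFv).resolve_left ht
      have hq0 : q = 0 := by
        apply Polynomial.eq_zero_of_infinite_isRoot
        apply Set.Infinite.mono (s := {t : ℚ | t ≠ -A/B})
        · intro t ht
          apply hroots
          intro h
          apply ht
          field_simp
          linarith [h]
        · have : {t : ℚ | t ≠ -A/B} = {-A/B}ᶜ := by ext t; simp [Set.mem_compl_iff]
          rw [this]
          exact (Set.finite_singleton _).infinite_compl
      have := lineSub_eval v u G 0
      rw [← hq, hq0] at this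
      simp only [Polynomial.eval_zero] at this
      rw [show (fun j => v j + 0 * u j) = v from by ext j; ring] at this
      exact this.symm
    rw [Finset.prod_cons, hG]
    exact mul_dvd_mul_left _ (IH (fun H hH => hspec H (Finset.mem_cons_of_mem hH))
      (fun H hH => hne H (Finset.mem_cons_of_mem hH))
      (fun H hH H' hH' => hpair H (Finset.mem_cons_of_mem hH) H' (Finset.mem_cons_of_mem hH')) G hvanG)

lemma exists_eval_ne_zero {n : ℕ} (p : MvPolynomial (Fin n) ℚ) (hp : p ≠ 0) :
    ∃ v : Fin n → ℚ, eval v p ≠ 0 := by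
  by_contra h
  push_neg at h
  exact hp (MvPolynomial.funext fun v => by rw [h v, map_zero])

lemma mem_polyInvariantsElem {n : ℕ} (g : GL (Fin n) ℚ) (f : MvPolynomial (Fin n) ℚ) :
    f ∈ polyInvariantsElem g ↔ matAct ((g : GL (Fin n) ℚ) : Matrix (Fin n) (Fin n) ℚ) f = f :=
  Iff.rfl

end Aux

/-- Let `s, t, r` be three distinct reflections in `GL_n(ℚ)` such that
`⟨s, t⟩` and `⟨t, r⟩` are finite, `⟨s, t⟩ ∩ ⟨t, r⟩ = ⟨t⟩`, and `⟨s, t, r⟩` contains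
reflections with infinitely many distinct reflecting hyperplanes.  Then
`ℚ[x_1, …, x_n] = ℚ[x_1, …, x_n]^s + ℚ[x_1, …, x_n]^t + ℚ[x_1, …, x_n]^r`. -/
theorem sup_invariantsElem_eq_top {n : ℕ} (s t r : GL (Fin n) ℚ)
    (hs : IsReflection s) (ht : IsReflection t) (hr : IsReflection r)
    (hst : s ≠ t) (htr : t ≠ r) (hsr : s ≠ r)
    (hfinst : ((Subgroup.closure {s, t} : Subgroup (GL (Fin n) ℚ)) : Set (GL (Fin n) ℚ)).Finite)
    (hfintr : ((Subgroup.closure {t, r} : Subgroup (GL (Fin n) ℚ)) : Set (GL (Fin n) ℚ)).Finite)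
    (hint : Subgroup.closure {s, t} ⊓ Subgroup.closure {t, r}
      = (Subgroup.closure {t} : Subgroup (GL (Fin n) ℚ)))
    (hinf : {H : Submodule ℚ (Fin n → ℚ) |
      ∃ g ∈ Subgroup.closure {s, t, r}, IsReflection g ∧ fixedSpace g = H}.Infinite) :
    polyInvariantsElem s ⊔ polyInvariantsElem t ⊔ polyInvariantsElem r = ⊤ := by
  classical
  by_contra hne
  rcases Nat.eq_zero_or_pos n with hn0 | hnpos
  · subst hn0
    exact hinf (Set.toFinite _)
  have hn : n ≠ 0 := by omega
  set S : Submodule ℚ (MvPolynomial (Fin n) ℚ) :=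
    polyInvariantsElem s ⊔ polyInvariantsElem t ⊔ polyInvariantsElem r with hSdef
  obtain ⟨f₀, hf₀⟩ : ∃ f₀, f₀ ∉ S := by
    by_contra h
    push_neg at h
    exact hne (Submodule.eq_top_iff'.mpr h)
  obtain ⟨lam, hlamS, hlamf₀⟩ := exists_functional S f₀ hf₀
  -- basic facts about s, t, r
  have hgen : ∀ g ∈ ({s, t, r} : Set (GL (Fin n) ℚ)), IsReflection g ∧ polyInvariantsElem g ≤ S := by
    intro g hg
    simp only [Set.mem_insert_iff, Set.mem_singleton_iff] at hg
    rcases hg with rfl | rfl | rfl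
    · exact ⟨hs, le_sup_of_le_left le_sup_left⟩
    · exact ⟨ht, le_sup_of_le_left le_sup_right⟩
    · exact ⟨hr, le_sup_right⟩
  have hanti : ∀ g ∈ ({s, t, r} : Set (GL (Fin n) ℚ)), ∀ f : MvPolynomial (Fin n) ℚ,
      lam (matAct ((g : GL (Fin n) ℚ) : Matrix (Fin n) (Fin n) ℚ) f) = - lam f := by
    intro g hg f
    obtain ⟨hgr, hgle⟩ := hgen g hg
    have hmm : ((g : GL (Fin n) ℚ) : Matrix (Fin n) (Fin n) ℚ)
        * ((g : GL (Fin n) ℚ) : Matrix (Fin n) (Fin n) ℚ) = 1 := by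
      have := congrArg (fun x : GL (Fin n) ℚ => (x : Matrix (Fin n) (Fin n) ℚ)) hgr.1
      simpa using this
    have hinv2 : f + matAct ((g : GL (Fin n) ℚ) : Matrix (Fin n) (Fin n) ℚ) f
        ∈ polyInvariantsElem g := by
      rw [mem_polyInvariantsElem, map_add, matAct_comp, hmm, matAct_one, add_comm]
    have h0 : lam (f + matAct ((g : GL (Fin n) ℚ) : Matrix (Fin n) (Fin n) ℚ) f) = 0 :=
      hlamS _ (hgle hinv2)
    rw [map_add] at h0
    linarith
  have hdetgen : ∀ g ∈ ({s, t, r} : Set (GL (Fin n) ℚ)),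
      ((g : GL (Fin n) ℚ) : Matrix (Fin n) (Fin n) ℚ).det = -1 := by
    intro g hg
    exact det_of_isReflection g (hgen g hg).1 hn
  -- the key relative invariance of lam on the closure
  have hP : ∀ w ∈ Subgroup.closure ({s, t, r} : Set (GL (Fin n) ℚ)),
      ∀ f : MvPolynomial (Fin n) ℚ,
        lam (matAct ((w : GL (Fin n) ℚ) : Matrix (Fin n) (Fin n) ℚ) f)
          = ((w : GL (Fin n) ℚ) : Matrix (Fin n) (Fin n) ℚ).det * lam f := by
    intro w hw
    induction hw using Subgroup.closure_induction with
    | mem x hx =>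
      intro f
      rw [hanti x hx f, hdetgen x hx]
      ring
    | one =>
      intro f
      have h1 : (((1 : GL (Fin n) ℚ) : GL (Fin n) ℚ) : Matrix (Fin n) (Fin n) ℚ) = 1 := rfl
      rw [h1, matAct_one, Matrix.det_one, one_mul]
    | mul x y hx hy hpx hpy =>
      intro f
      have hxy : (((x * y : GL (Fin n) ℚ)) : Matrix (Fin n) (Fin n) ℚ)
          = ((x : GL (Fin n) ℚ) : Matrix (Fin n) (Fin n) ℚ)
            * ((y : GL (Fin n) ℚ) : Matrix (Fin n) (Fin n) ℚ) := rfl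
      rw [hxy, ← matAct_comp, hpx, hpy, Matrix.det_mul]
      ring
    | inv x hx hpx =>
      intro f
      set A : Matrix (Fin n) (Fin n) ℚ := ((x : GL (Fin n) ℚ) : Matrix (Fin n) (Fin n) ℚ) with hA
      set A' : Matrix (Fin n) (Fin n) ℚ :=
        ((x⁻¹ : GL (Fin n) ℚ) : Matrix (Fin n) (Fin n) ℚ) with hA'
      have hAA' : A * A' = 1 := Units.mul_inv x
      have hdet1 : A.det * A'.det = 1 := by
        rw [← Matrix.det_mul, hAA', Matrix.det_one]
      have h2 := hpx (matAct A' f)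
      rw [matAct_comp, hAA', matAct_one] at h2
      have : A'.det * lam f = A'.det * (A.det * lam (matAct A' f)) := by rw [← h2]
      rw [this]
      ring_nf
      rw [show A'.det * A.det = 1 from by rw [mul_comm]; exact hdet1]
      ring
  -- find a monomial not killed by lam
  have hmono : ∃ m : Fin n →₀ ℕ, lam (monomial m (coeff m f₀)) ≠ 0 := by
    by_contra h
    push_neg at h
    apply hlamf₀
    rw [show f₀ = ∑ m ∈ f₀.support, monomial m (coeff m f₀) from
      (support_sum_monomial_coeff f₀).symm, map_sum]
    exact Finset.sum_eq_zero fun m _ => h m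
  obtain ⟨m, hm⟩ := hmono
  have hm1 : lam (monomial m (1 : ℚ)) ≠ 0 := by
    intro h
    apply hm
    rw [show (monomial m (coeff m f₀) : MvPolynomial (Fin n) ℚ)
      = (coeff m f₀) • monomial m 1 from by rw [smul_monomial, smul_eq_mul, mul_one]]
    rw [LinearMap.map_smul, h, smul_zero]
  set d : ℕ := m.sum fun _ e => e with hd
  set F : MvPolynomial (Fin n) ℚ := Fpoly lam d with hF
  have hFne : F ≠ 0 := by
    obtain ⟨c, hcpos, hc⟩ := coeff_Lgen_pow d m rfl
    intro h
    have h1 : coeff m F = lam (coeff m ((Lgen n) ^ d)) := coeff_lamApply lam _ m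
    rw [hc, LinearMap.map_smul, smul_eq_mul] at h1
    rw [h, coeff_zero] at h1
    have : (c : ℚ) ≠ 0 := Nat.cast_ne_zero.mpr (Nat.pos_iff_ne_zero.mp hcpos)
    exact hm1 (by
      rcases mul_eq_zero.mp h1.symm with h' | h'
      · exact absurd h' this
      · exact h')
  -- F vanishes on every reflecting hyperplane of the closure
  have hvanish : ∀ H ∈ {H : Submodule ℚ (Fin n → ℚ) |
      ∃ g ∈ Subgroup.closure {s, t, r}, IsReflection g ∧ fixedSpace g = H},
      (Module.finrank ℚ H = n - 1) ∧ (∀ v ∈ H, eval v F = 0) := by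
    rintro H ⟨g, hgcl, hgrefl, rfl⟩
    refine ⟨hgrefl.2, fun v hv => ?_⟩
    have hMv : ((g : GL (Fin n) ℚ) : Matrix (Fin n) (Fin n) ℚ).mulVec v = v := by
      have h1 := LinearMap.mem_ker.mp hv
      rw [LinearMap.sub_apply, LinearMap.id_apply, sub_eq_zero] at h1
      rw [← Matrix.toLin'_apply]
      exact h1
    have h2 : matAct ((g : GL (Fin n) ℚ) : Matrix (Fin n) (Fin n) ℚ) ((ell v) ^ d)
        = (ell v) ^ d := by
      rw [map_pow, matAct_ell, hMv]
    have h3 := hP g hgcl ((ell v) ^ d)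
    rw [h2, det_of_isReflection g hgrefl hn] at h3
    have h4 : eval v F = lam ((ell v) ^ d) := eval_Fpoly lam d v
    rw [h4]
    linarith
  -- pick totalDegree F + 1 distinct hyperplanes
  obtain ⟨T, hTsub, hTcard⟩ := hinf.exists_subset_card_eq (F.totalDegree + 1)
  have hTprop : ∀ H ∈ T, (Module.finrank ℚ H = n - 1) ∧ (∀ v ∈ H, eval v F = 0) :=
    fun H hH => hvanish H (hTsub hH)
  have hTne : ∀ H ∈ T, ∃ u, u ∉ H := by
    intro H hH
    by_contra h
    push_neg at h
    have : H = ⊤ := Submodule.eq_top_iff'.mpr h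
    have h2 := (hTprop H hH).1
    rw [this, finrank_top, Module.finrank_fin_fun] at h2
    omega
  have hTpair : ∀ H ∈ T, ∀ H' ∈ T, H ≠ H' → ∃ u ∈ H, u ∉ H' := by
    intro H hH H' hH' hne'
    by_contra h
    push_neg at h
    exact hne' (Submodule.eq_of_le_of_finrank_eq h
      (by rw [(hTprop H hH).1, (hTprop H' hH').1]))
  -- covectors
  have hcov : ∀ H ∈ T, ∃ c : Fin n → ℚ, ∀ v, ((∑ j, c j * v j = 0) ↔ v ∈ H) :=
    fun H hH => exists_covector H (hTprop H hH).1 hn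
  choose! cfun hcfun using hcov
  have hdvdF : (∏ H ∈ T, ell (cfun H)) ∣ F :=
    prod_ell_dvd T cfun hcfun hTne hTpair F (fun H hH => (hTprop H hH).2)
  -- each linear form is nonzero
  have hellne : ∀ H ∈ T, ell (cfun H) ≠ 0 := by
    intro H hH h
    obtain ⟨u, hu⟩ := hTne H hH
    have h1 : (∑ j, cfun H j * u j) ≠ 0 := fun h2 => hu ((hcfun H hH u).mp h2)
    apply h1
    rw [← eval_ell (cfun H) u, h, map_zero]
  have hprodne : (∏ H ∈ T, ell (cfun H)) ≠ 0 := Finset.prod_ne_zero_iff.mpr hellne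
  obtain ⟨u, hu⟩ := exists_eval_ne_zero _ hprodne
  obtain ⟨v₀, hv₀⟩ := exists_eval_ne_zero F hFne
  have hBu : ∀ H ∈ T, (∑ j, cfun H j * u j) ≠ 0 := by
    have h1 : eval u (∏ H ∈ T, ell (cfun H)) = ∏ H ∈ T, eval u (ell (cfun H)) := by
      rw [map_prod]
    rw [h1] at hu
    intro H hH
    have := Finset.prod_ne_zero_iff.mp hu H hH
    rwa [eval_ell] at this
  set ψ := lineSub v₀ u with hψ
  have hψFne : ψ F ≠ 0 := by
    intro h
    have h1 := lineSub_eval v₀ u F 0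
    rw [← hψ, h, Polynomial.eval_zero] at h1
    rw [show (fun j => v₀ j + 0 * u j) = v₀ from by ext j; ring] at h1
    exact hv₀ h1.symm
  have hdvdψ : (∏ H ∈ T, ψ (ell (cfun H))) ∣ ψ F := by
    rw [← map_prod ψ]
    exact map_dvd ψ hdvdF
  have hlin : ∀ H ∈ T, ψ (ell (cfun H))
      = Polynomial.C (∑ j, cfun H j * u j) * Polynomial.X
        + Polynomial.C (∑ j, cfun H j * v₀ j) := by
    intro H hH
    rw [hψ, lineSub, ell, map_sum]
    have h1 : ∀ j : Fin n, (aeval fun j => Polynomial.C (v₀ j) + Polynomial.C (u j) * Polynomial.X)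
        (C (cfun H j) * X j)
        = Polynomial.C (cfun H j * u j) * Polynomial.X + Polynomial.C (cfun H j * v₀ j) := by
      intro j
      rw [_root_.map_mul, aeval_X, aeval_C]
      have : (algebraMap ℚ (Polynomial ℚ)) (cfun H j) = Polynomial.C (cfun H j) := rfl
      rw [this]
      rw [Polynomial.C_mul, Polynomial.C_mul]
      ring
    rw [Finset.sum_congr rfl fun j _ => h1 j]
    rw [Finset.sum_add_distrib, ← Finset.sum_mul, ← map_sum Polynomial.C, ← map_sum Polynomial.C]
  have hdeg1 : ∀ H ∈ T, (ψ (ell (cfun H))).natDegree = 1 := by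
    intro H hH
    rw [hlin H hH]
    exact Polynomial.natDegree_linear (hBu H hH)
  have hfacne : ∀ H ∈ T, ψ (ell (cfun H)) ≠ 0 := by
    intro H hH h
    have := hdeg1 H hH
    rw [h, Polynomial.natDegree_zero] at this
    omega
  have hdegprod : (∏ H ∈ T, ψ (ell (cfun H))).natDegree = F.totalDegree + 1 := by
    rw [Polynomial.natDegree_prod _ _ hfacne]
    rw [Finset.sum_congr rfl hdeg1]
    rw [Finset.sum_const, smul_eq_mul, mul_one, hTcard]
  have hle1 : (∏ H ∈ T, ψ (ell (cfun H))).natDegree ≤ (ψ F).natDegree :=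
    Polynomial.natDegree_le_of_dvd hdvdψ hψFne
  have hle2 : (ψ F).natDegree ≤ F.totalDegree := natDegree_lineSub_le v₀ u F
  omega
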